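/- Let Z₁,…,Z_n be i.i.d. standard Gaussians, η_v = ∑_i v_i Z_i on {−1,1}ⁿ, M_n = ∑_i |Z_i|, and v* = (sgn(Z_i))_i. There exist constants ε₀, δ₀ > 0 such that with probability tending to 1 as n → ∞, every v ∈ {−1,1}ⁿ with ∑_i v_i v_i* ≤ ε₀·n satisfies η_v ≤ (1−δ₀)·M_n. -/

import Mathlib

open MeasureTheory ProbabilityTheory Real Filter
open scoped ENNReal NNReal

noncomputable section

/-- A real random variable is a centered Gaussian if its law is `gaussianReal 0 v`
for some variance `v`. -/
def IsCenteredGaussianRV {Ω : Type*} [MeasurableSpace Ω] (μ : Measure Ω) (X : Ω → ℝ) : Prop :=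
  ∃ v : NNReal, Measure.map X μ = gaussianReal 0 v

/-- A finite family of real random variables is a centered (jointly) Gaussian vector if
every linear combination is a centered Gaussian random variable. -/
def IsCenteredGaussianVector {Ω V : Type*} [MeasurableSpace Ω] [Fintype V]
    (μ : Measure Ω) (η : V → Ω → ℝ) : Prop :=
  (∀ v, Measurable (η v)) ∧
    ∀ a : V → ℝ, IsCenteredGaussianRV μ (fun ω => ∑ v, a v * η v ω)



lemma integrable_abs_gaussian : Integrable (fun x : ℝ => |x|) (gaussianReal 0 1) := by
  rw [gaussianReal_of_var_ne_zero 0 one_ne_zero]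
  rw [integrable_withDensity_iff (measurable_gaussianPDF 0 1)
    (ae_of_all _ fun x => ENNReal.ofReal_lt_top)]
  have base : Integrable (fun x : ℝ => |x| * rexp (-(1/2) * x ^ 2)) := by
    have h := (integrable_rpow_mul_exp_neg_mul_sq (b := 1/2) (by norm_num) (s := 1)
      (by norm_num)).abs
    refine h.congr (ae_of_all _ fun x => ?_)
    dsimp only
    rw [Real.rpow_one, abs_mul, Real.abs_exp]
  have : Integrable (fun x : ℝ => (√(2 * π))⁻¹ * (|x| * rexp (-(1/2) * x ^ 2))) :=
    base.const_mul _
  refine this.congr (ae_of_all _ fun x => ?_)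
  dsimp only
  unfold gaussianPDF gaussianPDFReal
  rw [ENNReal.toReal_ofReal (by positivity)]
  push_cast
  rw [mul_one, sub_zero]
  rw [show -x ^ 2 / (2 * 1) = -(1/2) * x ^ 2 by ring]
  ring

lemma smallball : ∃ c : ℝ, 0 < c ∧
    3/4 ≤ ((gaussianReal 0 1) {x : ℝ | c ≤ |x|}).toReal := by
  set ν := gaussianReal 0 1 with hν
  have h0 : ν {(0:ℝ)} = 0 :=
    gaussianReal_absolutelyContinuous 0 one_ne_zero (measure_singleton 0)
  have hmeas : ∀ k : ℕ, MeasurableSet {x : ℝ | |x| < 1/((k:ℝ)+1)} := fun k =>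
    measurableSet_lt measurable_abs measurable_const
  have hanti : Antitone (fun k : ℕ => {x : ℝ | |x| < 1/((k:ℝ)+1)}) := by
    intro k l hkl x hx
    simp only [Set.mem_setOf_eq] at hx ⊢
    refine hx.trans_le (one_div_le_one_div_of_le (by positivity) (by exact_mod_cast by linarith))
  have hiInter : ⋂ k : ℕ, {x : ℝ | |x| < 1/((k:ℝ)+1)} = {(0:ℝ)} := by
    ext x
    simp only [Set.mem_iInter, Set.mem_setOf_eq, Set.mem_singleton_iff]
    constructor
    · intro h
      by_contra hx
      have hpos : 0 < |x| := abs_pos.mpr hx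
      obtain ⟨k, hk⟩ := exists_nat_one_div_lt hpos
      exact absurd (h k) (not_lt.mpr hk.le)
    · rintro rfl k
      simp only [abs_zero]
      positivity
  have htend : Tendsto (fun k : ℕ => ν {x : ℝ | |x| < 1/((k:ℝ)+1)}) atTop (nhds 0) := by
    have := tendsto_measure_iInter_atTop (μ := ν)
      (fun k => (hmeas k).nullMeasurableSet) hanti ⟨0, measure_ne_top ν _⟩
    rw [hiInter, h0] at this
    exact this
  have hev : ∀ᶠ k : ℕ in atTop, ν {x : ℝ | |x| < 1/((k:ℝ)+1)} < 1/4 :=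
    htend.eventually_lt_const (by norm_num)
  obtain ⟨k, hk⟩ := hev.exists
  refine ⟨1/((k:ℝ)+1), by positivity, ?_⟩
  have hcompl : {x : ℝ | 1/((k:ℝ)+1) ≤ |x|} = {x : ℝ | |x| < 1/((k:ℝ)+1)}ᶜ := by
    ext x; simp [not_lt]
  rw [hcompl, prob_compl_eq_one_sub (hmeas k)]
  have h1 : ν {x : ℝ | |x| < 1/((k:ℝ)+1)} ≤ 1/4 := hk.le
  have h2 : (3/4 : ℝ≥0∞) ≤ 1 - ν {x : ℝ | |x| < 1/((k:ℝ)+1)} := by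
    have hadd : (3/4 : ℝ≥0∞) + 1/4 = 1 := by
      rw [ENNReal.div_add_div_same]
      norm_num
      exact ENNReal.div_self (by norm_num) (by norm_num)
    calc (3/4 : ℝ≥0∞) = 1 - 1/4 := ENNReal.eq_sub_of_add_eq (by norm_num) hadd
    _ ≤ 1 - ν {x : ℝ | |x| < 1/((k:ℝ)+1)} := tsub_le_tsub_left h1 1
  calc (3/4 : ℝ) = (3/4 : ℝ≥0∞).toReal := by norm_num
  _ ≤ _ := ENNReal.toReal_mono (by finiteness) h2


section DetLemma
open Finset

lemma det_lemma {n : ℕ} (c m : ℝ) (hc : 0 < c) (hm : 0 ≤ m) (a w : Fin n → ℝ)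
    (ha : ∀ i, 0 ≤ a i) (hw : ∀ i, w i = 1 ∨ w i = -1)
    (H1 : ∑ i, a i ≤ (m + 1) * n)
    (H2 : (11/16 : ℝ) * n ≤ ∑ i, (if c ≤ a i then (1:ℝ) else 0))
    (hsum : ∑ i, w i ≤ (1/16 : ℝ) * n) :
    ∑ i, w i * a i ≤ (1 - 5*c/(16*(m+1))) * ∑ i, a i := by
  classical
  set P : Finset (Fin n) := univ.filter (fun i => w i = -1) with hP
  set Q : Finset (Fin n) := univ.filter (fun i => c ≤ a i) with hQ
  have hQcard : (11/16 : ℝ) * n ≤ (Q.card : ℝ) := by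
    rw [sum_boole] at H2
    exact_mod_cast H2
  have hPsum : ∑ i, w i = (n : ℝ) - 2 * P.card := by
    have hsplit := sum_filter_add_sum_filter_not univ (fun i => w i = -1) w
    have h1 : ∑ i ∈ P, w i = -(P.card : ℝ) := by
      rw [sum_congr rfl (fun i hi => (mem_filter.mp hi).2)]
      simp
      rfl
    have h2 : ∑ i ∈ univ.filter (fun i => ¬ w i = -1), w i
        = ((univ.filter (fun i => ¬ w i = -1)).card : ℝ) := by
      rw [sum_congr rfl (fun i hi => (hw i).resolve_right (mem_filter.mp hi).2)]
      simp
    have h3 : P.card + (univ.filter (fun i => ¬ w i = -1)).card = n := by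
      rw [card_filter_add_card_filter_not]
      simp
    have h3' : ((univ.filter (fun i => ¬ w i = -1)).card : ℝ) = (n : ℝ) - P.card := by
      have := congrArg (Nat.cast : ℕ → ℝ) h3
      push_cast at this
      linarith
    rw [← hsplit, h1, h2, h3']
    ring
  have hPcard : (15/32 : ℝ) * n ≤ (P.card : ℝ) := by linarith
  have hPQ : (5/32 : ℝ) * n ≤ ((P ∩ Q).card : ℝ) := by
    have h := card_inter_add_card_union P Q
    have h2 : (P ∪ Q).card ≤ n := by
      simpa using card_le_univ (P ∪ Q)
    have h' := congrArg (Nat.cast : ℕ → ℝ) h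
    push_cast at h'
    have h2' : ((P ∪ Q).card : ℝ) ≤ n := by exact_mod_cast h2
    linarith
  have hsplit2 : ∑ i, w i * a i = ∑ i, a i - 2 * ∑ i ∈ P, a i := by
    have key : ∀ i, a i - w i * a i = if w i = -1 then 2 * a i else 0 := by
      intro i
      rcases hw i with h | h <;> (rw [h]; norm_num) <;> ring
    have e1 : ∑ i ∈ P, 2 * a i = ∑ i, (a i - w i * a i) := by
      rw [sum_filter]
      exact (sum_congr rfl fun i _ => (key i).symm)
    rw [sum_sub_distrib] at e1
    have e2 : ∑ i ∈ P, 2 * a i = 2 * ∑ i ∈ P, a i := by rw [mul_sum]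
    linarith
  have hPa : c * ((P ∩ Q).card : ℝ) ≤ ∑ i ∈ P, a i := by
    have step1 : (P ∩ Q).card • c ≤ ∑ i ∈ P ∩ Q, a i := by
      apply card_nsmul_le_sum
      intro i hi
      exact (mem_filter.mp (mem_of_mem_inter_right hi)).2
    rw [nsmul_eq_mul] at step1
    have step2 : ∑ i ∈ P ∩ Q, a i ≤ ∑ i ∈ P, a i :=
      sum_le_sum_of_subset_of_nonneg inter_subset_left (fun i _ _ => ha i)
    linarith [step1, step2]
  have hm1 : (0:ℝ) < m + 1 := by linarith
  have hd : 5*c/(16*(m+1)) * ((m+1) * n) = 5*c*n/16 := by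
    field_simp
  have hdpos : 0 < 5*c/(16*(m+1)) := by positivity
  have hda : 5*c/(16*(m+1)) * (∑ i, a i) ≤ 5*c*n/16 := by
    rw [← hd]
    exact mul_le_mul_of_nonneg_left H1 (le_of_lt hdpos)
  have hc' : 2 * (c * ((5/32:ℝ) * n)) ≤ 2 * (c * ((P ∩ Q).card : ℝ)) := by
    have := mul_le_mul_of_nonneg_left hPQ (le_of_lt hc)
    linarith
  have final : ∑ i, w i * a i ≤ (∑ i, a i) - 5*c*n/16 := by
    rw [hsplit2]
    nlinarith [hPa, hc']
  have : (1 - 5*c/(16*(m+1))) * ∑ i, a i = (∑ i, a i) - 5*c/(16*(m+1)) * (∑ i, a i) := by ring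
  linarith

end DetLemma

lemma tendsto_measure_one {Ω : Type*} [MeasurableSpace Ω] (μ : Measure Ω)
    [IsProbabilityMeasure μ] {A : ℕ → Set Ω} (hA : ∀ n, MeasurableSet (A n))
    (h : ∀ᵐ ω ∂μ, ∀ᶠ n in atTop, ω ∈ A n) :
    Tendsto (fun n => (μ (A n)).toReal) atTop (nhds 1) := by
  have heq : ∀ n, (μ (A n)).toReal = ∫ ω, (A n).indicator (fun _ => (1:ℝ)) ω ∂μ := by
    intro n
    rw [integral_indicator_const (1:ℝ) (hA n), smul_eq_mul, mul_one]
    rfl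
  simp_rw [heq]
  have h1 : (1:ℝ) = ∫ _, (1:ℝ) ∂μ := by simp
  rw [h1]
  refine tendsto_integral_of_dominated_convergence (fun _ => (1:ℝ)) ?_ (integrable_const 1) ?_ ?_
  · exact fun n => (measurable_const.indicator (hA n)).aestronglyMeasurable
  · intro n
    refine ae_of_all _ fun ω => ?_
    by_cases hω : ω ∈ A n <;> simp [Set.indicator_apply, hω]
  · filter_upwards [h] with ω hω
    refine Tendsto.congr' ?_ tendsto_const_nhds
    filter_upwards [hω] with n hn
    simp [Set.indicator_apply, hn]


/-- Hypercube example, second part: with `η_v = ∑ᵢ vᵢ Zᵢ` on `{−1,1}ⁿ`,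
`M_n = ∑ᵢ |Zᵢ|` and `v* = (sgn(Zᵢ))ᵢ`, there exist `ε₀, δ₀ > 0` such that with
probability tending to 1, every `v ∈ {−1,1}ⁿ` with `∑ᵢ vᵢ vᵢ* ≤ ε₀ n` satisfies
`η_v ≤ (1−δ₀) M_n`. -/
theorem stmt19 {Ω : Type*} [MeasurableSpace Ω] (μ : Measure Ω) [IsProbabilityMeasure μ]
    (Z : ℕ → Ω → ℝ) (hmeas : ∀ i, Measurable (Z i))
    (hindep : iIndepFun Z μ)
    (hgauss : ∀ i, Measure.map (Z i) μ = gaussianReal 0 1) :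
    ∃ ε₀ > (0:ℝ), ∃ δ₀ > (0:ℝ), Tendsto (fun n : ℕ =>
      (μ {ω | ∀ v : Fin n → ℝ, (∀ i, v i = 1 ∨ v i = -1) →
        (∑ i : Fin n, v i * (if 0 ≤ Z i ω then (1:ℝ) else -1)) ≤ ε₀ * n →
        ∑ i : Fin n, v i * Z i ω ≤ (1 - δ₀) * ∑ i : Fin n, |Z i ω|}).toReal)
      atTop (nhds 1) := by
  classical
  obtain ⟨c, hc, hp34⟩ := smallball
  set ν : Measure ℝ := gaussianReal 0 1 with hν
  set m : ℝ := ∫ x, |x| ∂ν with hm_def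
  have hm0 : 0 ≤ m := integral_nonneg fun x => abs_nonneg x
  have hm1 : (0:ℝ) < m + 1 := by linarith
  refine ⟨1/16, by norm_num, 5*c/(16*(m+1)), by positivity, ?_⟩
  -- the two sequences of iid variables
  set X1 : ℕ → Ω → ℝ := fun i ω => |Z i ω| with hX1
  set g : ℝ → ℝ := fun x => if c ≤ |x| then 1 else 0 with hg
  have hgmeas : Measurable g :=
    Measurable.ite (measurableSet_le measurable_const measurable_abs)
      measurable_const measurable_const
  set X2 : ℕ → Ω → ℝ := fun i ω => g (Z i ω) with hX2
  have hmeas1 : ∀ i, Measurable (X1 i) := fun i => (hmeas i).abs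
  have hmeas2 : ∀ i, Measurable (X2 i) := fun i => hgmeas.comp (hmeas i)
  have hindep1 : Pairwise (Function.onFun (IndepFun · · μ) X1) := fun i j hij =>
    (hindep.indepFun hij).comp measurable_abs measurable_abs
  have hindep2 : Pairwise (Function.onFun (IndepFun · · μ) X2) := fun i j hij =>
    (hindep.indepFun hij).comp hgmeas hgmeas
  have hident1 : ∀ i, IdentDistrib (X1 i) (X1 0) μ μ := by
    intro i
    refine ⟨(hmeas1 i).aemeasurable, (hmeas1 0).aemeasurable, ?_⟩
    show Measure.map (fun ω => |Z i ω|) μ = Measure.map (fun ω => |Z 0 ω|) μ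
    rw [show (fun ω => |Z i ω|) = (fun x : ℝ => |x|) ∘ Z i from rfl,
      show (fun ω => |Z 0 ω|) = (fun x : ℝ => |x|) ∘ Z 0 from rfl,
      ← Measure.map_map measurable_abs (hmeas i),
      ← Measure.map_map measurable_abs (hmeas 0), hgauss i, hgauss 0]
  have hident2 : ∀ i, IdentDistrib (X2 i) (X2 0) μ μ := by
    intro i
    refine ⟨(hmeas2 i).aemeasurable, (hmeas2 0).aemeasurable, ?_⟩
    show Measure.map (g ∘ Z i) μ = Measure.map (g ∘ Z 0) μ
    rw [← Measure.map_map hgmeas (hmeas i), ← Measure.map_map hgmeas (hmeas 0),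
      hgauss i, hgauss 0]
  have hint1 : Integrable (X1 0) μ := by
    have h := integrable_abs_gaussian
    rw [← hν, ← hgauss 0] at h
    exact (integrable_map_measure measurable_abs.aestronglyMeasurable
      (hmeas 0).aemeasurable).mp h
  have hint2 : Integrable (X2 0) μ := by
    refine Integrable.mono' (integrable_const 1)
      (hmeas2 0).aestronglyMeasurable (ae_of_all _ fun ω => ?_)
    by_cases h : c ≤ |Z 0 ω| <;> simp [hX2, hg, h]
  have hE1 : μ[X1 0] = m := by
    rw [hm_def, ← hgauss 0,
      integral_map (hmeas 0).aemeasurable measurable_abs.aestronglyMeasurable]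
  set p : ℝ := (ν {x : ℝ | c ≤ |x|}).toReal with hp_def
  have hsmeas : MeasurableSet {x : ℝ | c ≤ |x|} :=
    measurableSet_le measurable_const measurable_abs
  have hE2 : μ[X2 0] = p := by
    have h1 : μ[X2 0] = ∫ x, g x ∂ν := by
      rw [← hgauss 0,
        integral_map (hmeas 0).aemeasurable hgmeas.aestronglyMeasurable]
    have h2 : g = Set.indicator {x : ℝ | c ≤ |x|} (fun _ => (1:ℝ)) := by
      ext x
      simp [hg, Set.indicator_apply]
    rw [h1, h2, integral_indicator_const (1:ℝ) hsmeas, smul_eq_mul, mul_one, hp_def]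
    rfl
  have hSL1 := strong_law_ae_real X1 hint1 hindep1 hident1
  have hSL2 := strong_law_ae_real X2 hint2 hindep2 hident2
  rw [hE1] at hSL1
  rw [hE2] at hSL2
  -- the good events
  set A : ℕ → Set Ω := fun n =>
    {ω | (∑ i ∈ Finset.range n, |Z i ω|) ≤ (m+1) * n ∧
      (11/16 : ℝ) * n ≤ ∑ i ∈ Finset.range n, g (Z i ω)} with hA_def
  have hAmeas : ∀ n, MeasurableSet (A n) := by
    intro n
    refine MeasurableSet.inter ?_ ?_
    · exact measurableSet_le (Finset.measurable_sum _ fun i _ => (hmeas i).abs)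
        measurable_const
    · exact measurableSet_le measurable_const
        (Finset.measurable_sum _ fun i _ => hgmeas.comp (hmeas i))
  have hae : ∀ᵐ ω ∂μ, ∀ᶠ n in atTop, ω ∈ A n := by
    filter_upwards [hSL1, hSL2] with ω h1 h2
    have e1 : ∀ᶠ n : ℕ in atTop, (∑ i ∈ Finset.range n, X1 i ω) / n < m + 1 :=
      h1.eventually_lt_const (lt_add_one m)
    have e2 : ∀ᶠ n : ℕ in atTop, (11/16 : ℝ) < (∑ i ∈ Finset.range n, X2 i ω) / n :=
      h2.eventually_const_lt (by linarith)
    filter_upwards [e1, e2, eventually_ge_atTop 1] with n h1' h2' hn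
    have hn' : (0:ℝ) < n := by exact_mod_cast hn
    constructor
    · have := (div_lt_iff₀ hn').mp h1'
      simpa [hX1] using this.le
    · have := (lt_div_iff₀ hn').mp h2'
      simpa [hX2] using this.le
  have hone := tendsto_measure_one μ hAmeas hae
  refine tendsto_of_tendsto_of_tendsto_of_le_of_le hone tendsto_const_nhds ?_ ?_
  · intro n
    refine ENNReal.toReal_mono (measure_ne_top μ _) (measure_mono ?_)
    intro ω hω
    intro v hv hvsum
    set w : Fin n → ℝ := fun i => v i * (if 0 ≤ Z (i:ℕ) ω then (1:ℝ) else -1) with hw_def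
    set a : Fin n → ℝ := fun i => |Z (i:ℕ) ω| with ha_def
    have hws : ∀ i, w i = 1 ∨ w i = -1 := by
      intro i
      rcases hv i with h | h <;> by_cases h0 : 0 ≤ Z (i:ℕ) ω <;>
        simp [hw_def, h, h0]
    have hZeq : ∀ i : Fin n, v i * Z (i:ℕ) ω = w i * a i := by
      intro i
      by_cases h0 : 0 ≤ Z (i:ℕ) ω
      · simp only [hw_def, ha_def, if_pos h0, abs_of_nonneg h0]
        ring
      · simp only [hw_def, ha_def, if_neg h0, abs_of_neg (lt_of_not_ge h0)]
        ring
    have H1 : ∑ i, a i ≤ (m + 1) * n := by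
      rw [ha_def]
      rw [Fin.sum_univ_eq_sum_range (fun i => |Z i ω|) n]
      exact hω.1
    have H2 : (11/16 : ℝ) * n ≤ ∑ i, (if c ≤ a i then (1:ℝ) else 0) := by
      have := hω.2
      rw [← Fin.sum_univ_eq_sum_range (fun i => g (Z i ω)) n] at this
      exact this
    have hsum' : ∑ i, w i ≤ (1/16 : ℝ) * n := hvsum
    calc ∑ i : Fin n, v i * Z (i:ℕ) ω = ∑ i, w i * a i :=
          Finset.sum_congr rfl fun i _ => hZeq i
      _ ≤ (1 - 5*c/(16*(m+1))) * ∑ i, a i :=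
          det_lemma c m hc hm0 a w (fun i => abs_nonneg _) hws H1 H2 hsum'
  · intro n
    exact (ENNReal.toReal_mono ENNReal.one_ne_top prob_le_one).trans_eq ENNReal.toReal_one
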